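/- Let f : X × P → ]-∞,+∞] be a proper convex lower semicontinuous function on the product of two Euclidean spaces whose effective domain is a product set Y × P₀, and suppose that for every y ∈ Y the function f(y,·) is differentiable on the interior of P₀. Then for any p in the interior of P₀, the marginal function g(p) = inf_{y ∈ X} f(y,p), if the infimum is attained at some y*, is differentiable at p with ∇g(p) = ∇_p f(y*, p). -/

import Mathlib

open Filter Topology

/-- differentiability of the marginal function of a proper convex lsc
function with rectangular effective domain, differentiable in the parameter. -/
theorem stmt0
    {X P : Type*} [NormedAddCommGroup X] [InnerProductSpace ℝ X] [FiniteDimensional ℝ X]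
    [NormedAddCommGroup P] [InnerProductSpace ℝ P] [FiniteDimensional ℝ P]
    (f : X × P → EReal) (Y : Set X) (P₀ : Set P)
    (hbot : ∀ z, f z ≠ ⊥) (hprop : ∃ z, f z ≠ ⊤)
    (hconv : ∀ (z w : X × P) (a b : ℝ), 0 < a → 0 < b → a + b = 1 → f z < ⊤ → f w < ⊤ →
      f (a • z + b • w) ≤ (a : EReal) * f z + (b : EReal) * f w)
    (hlsc : LowerSemicontinuous f)
    (hdom : {z : X × P | f z < ⊤} = Y ×ˢ P₀)
    (hdiff : ∀ y ∈ Y, ∀ p ∈ interior P₀,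
      DifferentiableAt ℝ (fun q => (f (y, q)).toReal) p)
    (g : P → EReal) (hg : ∀ q, g q = ⨅ y : X, f (y, q))
    (p : P) (hp : p ∈ interior P₀)
    (ystar : X) (hmin : f (ystar, p) = g p) :
    HasGradientAt (fun q => (g q).toReal)
      (gradient (fun q => (f (ystar, q)).toReal) p) p := by
  have hpP₀ : p ∈ P₀ := interior_subset hp
  -- Y is nonempty
  obtain ⟨z₀, hz₀⟩ := hprop
  have hz₀mem : z₀ ∈ Y ×ˢ P₀ := by rw [← hdom]; exact lt_top_iff_ne_top.2 hz₀
  have hy₀ : z₀.1 ∈ Y := hz₀mem.1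
  -- g p is finite
  have hfy₀p : f (z₀.1, p) < ⊤ := by
    have : (z₀.1, p) ∈ Y ×ˢ P₀ := ⟨hy₀, hpP₀⟩
    rw [← hdom] at this; exact this
  have hgp_top : g p < ⊤ := by
    rw [hg p]; exact lt_of_le_of_lt (iInf_le _ z₀.1) hfy₀p
  have hgp_bot : g p ≠ ⊥ := by rw [← hmin]; exact hbot _
  set gp : ℝ := (g p).toReal with hgpdef
  have hgp : g p = (gp : EReal) := (EReal.coe_toReal hgp_top.ne hgp_bot).symm
  -- ystar ∈ Y
  have hyY : ystar ∈ Y := by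
    have : (ystar, p) ∈ Y ×ˢ P₀ := by
      rw [← hdom]; show f (ystar, p) < ⊤; rw [hmin]; exact hgp_top
    exact this.1
  set H : P → ℝ := fun q => (f (ystar, q)).toReal with hHdef
  have hHp : H p = gp := by rw [hHdef]; simp only []; rw [hmin]
  -- for q ∈ P₀, f (ystar, q) is finite
  have hfin : ∀ q ∈ P₀, f (ystar, q) = ((H q : ℝ) : EReal) := by
    intro q hq
    have htop : f (ystar, q) < ⊤ := by
      have : (ystar, q) ∈ Y ×ˢ P₀ := ⟨hyY, hq⟩
      rw [← hdom] at this; exact this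
    exact (EReal.coe_toReal htop.ne (hbot _)).symm
  have hH : HasGradientAt H (gradient H p) p := (hdiff ystar hyY p hp).hasGradientAt
  rw [hasGradientAt_iff_isLittleO] at hH ⊢
  set D := gradient H p
  -- reflection
  set σ : P → P := fun q => p + (p - q) with hσdef
  have hσdist : ∀ q, dist (σ q) p = dist q p := by
    intro q
    rw [dist_eq_norm, dist_eq_norm]
    have : σ q - p = -(q - p) := by rw [hσdef]; show p + (p - q) - p = -(q - p); rw [add_sub_cancel_left, neg_sub]
    rw [this, norm_neg]
  obtain ⟨ε, hε, hball⟩ := Metric.isOpen_iff.mp isOpen_interior p hp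
  -- the key sandwich
  have key : ∀ q ∈ Metric.ball p ε,
      2 * gp - H (σ q) ≤ (g q).toReal ∧ (g q).toReal ≤ H q ∧ g q ≠ ⊥ ∧ g q ≠ ⊤ := by
    intro q hq
    have hq' : σ q ∈ Metric.ball p ε := by rwa [Metric.mem_ball, hσdist]
    have hqP₀ : q ∈ P₀ := interior_subset (hball hq)
    have hq'P₀ : σ q ∈ P₀ := interior_subset (hball hq')
    have hfq : f (ystar, q) = ((H q : ℝ) : EReal) := hfin q hqP₀
    have hfq' : f (ystar, σ q) = ((H (σ q) : ℝ) : EReal) := hfin (σ q) hq'P₀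
    have hupper : g q ≤ ((H q : ℝ) : EReal) := by
      rw [hg q, ← hfq]; exact iInf_le _ ystar
    have hlower : ((2 * gp - H (σ q) : ℝ) : EReal) ≤ g q := by
      rw [hg q]
      refine le_iInf fun y => ?_
      by_cases hyt : f (y, q) = ⊤
      · rw [hyt]; exact le_top
      have hyt' : f (y, q) < ⊤ := lt_top_iff_ne_top.2 hyt
      set A : ℝ := (f (y, q)).toReal with hAdef
      have hfyq : f (y, q) = ((A : ℝ) : EReal) := (EReal.coe_toReal hyt (hbot _)).symm
      have hmid : (1/2 : ℝ) • ((y, q) : X × P) + (1/2 : ℝ) • ((ystar, σ q) : X × P)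
          = (((1/2 : ℝ) • y + (1/2 : ℝ) • ystar : X), p) := by
        rw [Prod.ext_iff]
        constructor
        · rfl
        · show (1/2 : ℝ) • q + (1/2 : ℝ) • σ q = p
          rw [hσdef]; module
      have hc := hconv (y, q) (ystar, σ q) (1/2) (1/2) (by norm_num) (by norm_num)
        (by norm_num) hyt' (by rw [hfq']; exact EReal.coe_lt_top _)
      rw [hmid, hfyq, hfq'] at hc
      have hgple : (gp : EReal) ≤ ((1/2 : ℝ) : EReal) * (A : EReal)
          + ((1/2 : ℝ) : EReal) * ((H (σ q) : ℝ) : EReal) := by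
        refine le_trans ?_ hc
        rw [← hgp, hg p]
        exact iInf_le _ _
      have : (gp : EReal) ≤ (((1/2) * A + (1/2) * H (σ q) : ℝ) : EReal) := by
        rw [EReal.coe_add, EReal.coe_mul, EReal.coe_mul]; exact hgple
      have hr : gp ≤ (1/2) * A + (1/2) * H (σ q) := by exact_mod_cast this
      rw [hfyq]
      exact_mod_cast (by linarith : 2 * gp - H (σ q) ≤ A)
    have hgqbot : g q ≠ ⊥ := fun h => by
      rw [h] at hlower; exact (EReal.bot_lt_coe _).not_ge hlower
    have hgqtop : g q ≠ ⊤ := fun h => by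
      rw [h] at hupper; exact (EReal.coe_lt_top _).not_ge hupper
    have hgq : g q = (((g q).toReal : ℝ) : EReal) := (EReal.coe_toReal hgqtop hgqbot).symm
    refine ⟨?_, ?_, hgqbot, hgqtop⟩
    · rw [hgq] at hlower; exact_mod_cast hlower
    · rw [hgq] at hupper; exact_mod_cast hupper
  -- put together the little-o estimate
  set e : P → ℝ := fun q => H q - H p - inner ℝ D (q - p) with hedef
  have h1 : e =o[𝓝 p] fun q => q - p := hH
  have hσtendsto : Tendsto σ (𝓝 p) (𝓝 p) := by
    have hcont : Continuous σ := by rw [hσdef]; exact continuous_const.add (continuous_const.sub continuous_id)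
    have h2 : σ p = p := by simp [hσdef]
    simpa [h2] using hcont.tendsto p
  have h2 : (fun q => e (σ q)) =o[𝓝 p] fun q => q - p := by
    have hcomp := h1.comp_tendsto hσtendsto
    refine hcomp.trans_isBigO ?_
    have heq : (fun q => σ q - p) = fun q => -(q - p) := by
      funext q; rw [hσdef]; show p + (p - q) - p = -(q - p); rw [add_sub_cancel_left, neg_sub]
    rw [Function.comp_def, heq]
    simpa using (Asymptotics.isBigO_refl (fun q => q - p) (𝓝 p)).neg_left
  have hsum : (fun q => ‖e q‖ + ‖e (σ q)‖) =o[𝓝 p] fun q => q - p :=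
    h1.norm_left.add h2.norm_left
  refine Asymptotics.IsBigO.trans_isLittleO ?_ hsum
  rw [Asymptotics.isBigO_iff]
  refine ⟨1, ?_⟩
  filter_upwards [Metric.ball_mem_nhds p hε] with q hq
  obtain ⟨hlo, hhi, hbotq, htopq⟩ := key q hq
  have ht : (inner ℝ D (σ q - p) : ℝ) = -(inner ℝ D (q - p) : ℝ) := by
    have hs : σ q - p = -(q - p) := by rw [hσdef]; show p + (p - q) - p = -(q - p); rw [add_sub_cancel_left, neg_sub]
    rw [hs, inner_neg_right]
  have he1 : e q = H q - H p - inner ℝ D (q - p) := rfl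
  have he2 : e (σ q) = H (σ q) - H p + inner ℝ D (q - p) := by
    show H (σ q) - H p - inner ℝ D (σ q - p) = _
    rw [ht]; ring
  have hGpH : (g p).toReal = H p := by rw [hHp]
  simp only [Real.norm_eq_abs, one_mul]
  have h4 : |(|e q| + |e (σ q)|)| = |e q| + |e (σ q)| := abs_of_nonneg (by positivity)
  rw [h4, abs_le]
  have hHpgp : H p = gp := hHp
  clear_value gp H D e σ
  set t : ℝ := inner ℝ D (q - p) with htd
  constructor
  · have h6 : -(e (σ q)) ≤ (g q).toReal - (g p).toReal - t := by
      rw [he2, hGpH, hHpgp]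
      linarith [hlo]
    have := le_abs_self (e (σ q))
    have h5 : (0:ℝ) ≤ |e q| := abs_nonneg _
    linarith [h6]
  · have h7 : (g q).toReal - (g p).toReal - t ≤ e q := by
      rw [he1, hGpH]
      linarith [hhi]
    have := le_abs_self (e q)
    have h5 : (0:ℝ) ≤ |e (σ q)| := abs_nonneg _
    linarith [h7]
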